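/- arXiv:1210.5043 — 2 statements merged into one kernel-verified Lean document; each statement's English description precedes it below -/
import Mathlib

section
/- Let Δ ≥ 3 and n be integers, and let k be an integer with 0 ≤ k. Define χ(k) = (Δ−k)/√(Δ+1) + k/√(Δ+2) + k/√3 + (n−1−Δ−k)/2. Then χ is strictly increasing in k; in particular, if n/2 ≤ Δ ≤ n−1 and 0 ≤ k ≤ n−Δ−1, its maximum is (2Δ−n+1)/√(Δ+1) + (n−Δ−1)/√(Δ+2) + (n−Δ−1)/√3, attained only at k = n−Δ−1; and if 2 ≤ Δ ≤ (n−1)/2 and 0 ≤ k ≤ Δ, its maximum is (n−1−2Δ)/2 + Δ/√3 + Δ/√(Δ+2), attained only at k = Δ. -/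
theorem stmt_14 (n Δ : ℕ) (hΔ : 3 ≤ Δ) :
    StrictMono (fun k : ℕ =>
      ((Δ : ℝ) - k) / Real.sqrt ((Δ : ℝ) + 1) + (k : ℝ) / Real.sqrt ((Δ : ℝ) + 2) +
        (k : ℝ) / Real.sqrt 3 + ((n : ℝ) - 1 - Δ - k) / 2) ∧
    (n ≤ 2 * Δ → Δ ≤ n - 1 →
      ∀ k : ℕ, k ≤ n - Δ - 1 →
        (((Δ : ℝ) - k) / Real.sqrt ((Δ : ℝ) + 1) + (k : ℝ) / Real.sqrt ((Δ : ℝ) + 2) +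
            (k : ℝ) / Real.sqrt 3 + ((n : ℝ) - 1 - Δ - k) / 2 ≤
          (2 * (Δ : ℝ) - n + 1) / Real.sqrt ((Δ : ℝ) + 1) +
            ((n : ℝ) - Δ - 1) / Real.sqrt ((Δ : ℝ) + 2) + ((n : ℝ) - Δ - 1) / Real.sqrt 3) ∧
        (((Δ : ℝ) - k) / Real.sqrt ((Δ : ℝ) + 1) + (k : ℝ) / Real.sqrt ((Δ : ℝ) + 2) +
            (k : ℝ) / Real.sqrt 3 + ((n : ℝ) - 1 - Δ - k) / 2 =
          (2 * (Δ : ℝ) - n + 1) / Real.sqrt ((Δ : ℝ) + 1) +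
            ((n : ℝ) - Δ - 1) / Real.sqrt ((Δ : ℝ) + 2) + ((n : ℝ) - Δ - 1) / Real.sqrt 3 ↔
          k = n - Δ - 1)) ∧
    (2 * Δ ≤ n - 1 →
      ∀ k : ℕ, k ≤ Δ →
        (((Δ : ℝ) - k) / Real.sqrt ((Δ : ℝ) + 1) + (k : ℝ) / Real.sqrt ((Δ : ℝ) + 2) +
            (k : ℝ) / Real.sqrt 3 + ((n : ℝ) - 1 - Δ - k) / 2 ≤
          ((n : ℝ) - 1 - 2 * Δ) / 2 + (Δ : ℝ) / Real.sqrt 3 + (Δ : ℝ) / Real.sqrt ((Δ : ℝ) + 2)) ∧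
        (((Δ : ℝ) - k) / Real.sqrt ((Δ : ℝ) + 1) + (k : ℝ) / Real.sqrt ((Δ : ℝ) + 2) +
            (k : ℝ) / Real.sqrt 3 + ((n : ℝ) - 1 - Δ - k) / 2 =
          ((n : ℝ) - 1 - 2 * Δ) / 2 + (Δ : ℝ) / Real.sqrt 3 + (Δ : ℝ) / Real.sqrt ((Δ : ℝ) + 2) ↔
          k = Δ)) := by
  have hΔ3 : (3:ℝ) ≤ (Δ:ℝ) := by exact_mod_cast hΔ
  set s1 := Real.sqrt ((Δ:ℝ) + 1) with hs1def
  set s2 := Real.sqrt ((Δ:ℝ) + 2) with hs2def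
  set s3 := Real.sqrt 3 with hs3def
  have hs1sq : s1 ^ 2 = (Δ:ℝ) + 1 := Real.sq_sqrt (by positivity)
  have hs2sq : s2 ^ 2 = (Δ:ℝ) + 2 := Real.sq_sqrt (by positivity)
  have hs3sq : s3 ^ 2 = 3 := Real.sq_sqrt (by norm_num)
  have hs1pos : 0 < s1 := Real.sqrt_pos.mpr (by positivity)
  have hs2pos : 0 < s2 := Real.sqrt_pos.mpr (by positivity)
  have hs3pos : 0 < s3 := Real.sqrt_pos.mpr (by norm_num)
  have hs1ge : (2:ℝ) ≤ s1 := by nlinarith [hs1sq, hs1pos, hΔ3]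
  have hs2ge : (2:ℝ) ≤ s2 := by nlinarith [hs2sq, hs2pos, hΔ3]
  have hs12 : s1 ≤ s2 := Real.sqrt_le_sqrt (by linarith)
  have hdiff : (s2 - s1) * (s2 + s1) = 1 := by nlinarith [hs1sq, hs2sq]
  have key : 1/s1 + 1/2 < 1/s2 + 1/s3 := by
    have h12 : 1/s1 - 1/s2 ≤ 1/16 := by
      rw [div_sub_div _ _ (ne_of_gt hs1pos) (ne_of_gt hs2pos),
        div_le_div_iff₀ (by positivity) (by norm_num)]
      nlinarith [hdiff, hs1ge, hs2ge, hs12,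
        mul_nonneg (sub_nonneg.mpr hs12) (by linarith : (0:ℝ) ≤ s1 + s2 - 4)]
    have h3 : (9:ℝ)/16 < 1/s3 := by
      rw [div_lt_div_iff₀ (by norm_num) hs3pos]
      nlinarith [hs3sq, hs3pos, sq_nonneg (3*s3 - 5)]
    linarith
  have hmono : StrictMono (fun k : ℕ =>
      ((Δ : ℝ) - k) / s1 + (k : ℝ) / s2 + (k : ℝ) / s3 + ((n : ℝ) - 1 - Δ - k) / 2) := by
    apply strictMono_nat_of_lt_succ
    intro k
    have expand : (((Δ:ℝ) - ((k:ℝ)+1))/s1 + ((k:ℝ)+1)/s2 + ((k:ℝ)+1)/s3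
          + ((n:ℝ) - 1 - Δ - ((k:ℝ)+1))/2)
        - (((Δ:ℝ) - k)/s1 + (k:ℝ)/s2 + (k:ℝ)/s3 + ((n:ℝ) - 1 - Δ - k)/2)
        = 1/s2 + 1/s3 - 1/s1 - 1/2 := by
      field_simp
      ring
    push_cast
    linarith [expand, key]
  refine ⟨hmono, ?_, ?_⟩
  · intro hn2 hn1 k hk
    have hΔn : Δ + 1 ≤ n := by omega
    have hm : ((n - Δ - 1 : ℕ):ℝ) = (n:ℝ) - Δ - 1 := by
      rw [Nat.cast_sub (by omega : 1 ≤ n - Δ), Nat.cast_sub (by omega : Δ ≤ n)]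
      norm_num
    have hval : ((Δ:ℝ) - ((n - Δ - 1 : ℕ):ℝ))/s1 + ((n - Δ - 1 : ℕ):ℝ)/s2
          + ((n - Δ - 1 : ℕ):ℝ)/s3 + ((n:ℝ) - 1 - Δ - ((n - Δ - 1 : ℕ):ℝ))/2
        = (2*(Δ:ℝ) - n + 1)/s1 + ((n:ℝ) - Δ - 1)/s2 + ((n:ℝ) - Δ - 1)/s3 := by
      rw [hm]; ring
    refine ⟨le_of_le_of_eq (hmono.monotone hk) hval, ?_, ?_⟩
    · intro heq
      exact hmono.injective (heq.trans hval.symm)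
    · intro heq
      subst heq
      exact hval
  · intro hn2 k hk
    have hval : ((Δ:ℝ) - ((Δ:ℕ):ℝ))/s1 + ((Δ:ℕ):ℝ)/s2 + ((Δ:ℕ):ℝ)/s3
          + ((n:ℝ) - 1 - Δ - ((Δ:ℕ):ℝ))/2
        = ((n:ℝ) - 1 - 2*Δ)/2 + (Δ:ℝ)/s3 + (Δ:ℝ)/s2 := by
      ring
    refine ⟨le_of_le_of_eq (hmono.monotone hk) hval, ?_, ?_⟩
    · intro heq
      exact hmono.injective (heq.trans hval.symm)
    · intro heq
      subst heq
      exact hval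
end

section
/- For a vertex u in a connected graph Q with at least two vertices, let G₁ be obtained from Q by attaching two disjoint paths of a and b vertices to u (adding an edge from u to an end of each path), and let G₂ be obtained from Q by attaching a single path of a+b vertices to u, where a ≥ b ≥ 1. Then χ(G₁) < χ(G₂), where χ(G) = Σ_{uv ∈ E(G)} 1/√(d_G(u)+d_G(v)). -/
/-- The sum-connectivity index `χ(G) = Σ_{uv ∈ E(G)} 1/√(d(u)+d(v))`:
each unordered edge is counted once via a halved double sum. -/
noncomputable def sumConn {V : Type*} [Fintype V] (G : SimpleGraph V) : ℝ := by
  classical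
  exact (1 / 2) * ∑ u : V, ∑ v : V,
    if G.Adj u v then (Real.sqrt ((G.degree u : ℝ) + (G.degree v : ℝ)))⁻¹ else 0

/-- The graph obtained from `Q` by attaching a path on `a` new vertices to `u`:
the new vertices `0, 1, …, a-1` form a path, and `u` is joined to the terminal vertex `0`. -/
def attachPath {V : Type*} (Q : SimpleGraph V) (u : V) (a : ℕ) : SimpleGraph (V ⊕ Fin a) :=
  SimpleGraph.fromRel (fun x y =>
    (∃ v w, x = Sum.inl v ∧ y = Sum.inl w ∧ Q.Adj v w) ∨
    (∃ i j : Fin a, x = Sum.inr i ∧ y = Sum.inr j ∧ (i : ℕ) + 1 = (j : ℕ)) ∨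
    (x = Sum.inl u ∧ ∃ i : Fin a, y = Sum.inr i ∧ (i : ℕ) = 0))

open Finset

section
variable {V : Type*} (Q : SimpleGraph V) (u : V) (n : ℕ)

lemma adj_ll (v w : V) : (attachPath Q u n).Adj (Sum.inl v) (Sum.inl w) ↔ Q.Adj v w := by
  simp only [attachPath, SimpleGraph.fromRel_adj]
  constructor
  · rintro ⟨hne, h | h⟩ <;> aesop (add norm SimpleGraph.adj_comm)
  · intro h
    exact ⟨by simpa using h.ne, Or.inl (Or.inl ⟨v, w, rfl, rfl, h⟩)⟩

lemma adj_lr (v : V) (j : Fin n) :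
    (attachPath Q u n).Adj (Sum.inl v) (Sum.inr j) ↔ v = u ∧ (j : ℕ) = 0 := by
  simp only [attachPath, SimpleGraph.fromRel_adj]
  constructor
  · rintro ⟨hne, h | h⟩ <;> aesop
  · rintro ⟨rfl, h⟩
    exact ⟨by simp, Or.inl (Or.inr (Or.inr ⟨rfl, j, rfl, h⟩))⟩

lemma adj_rr (i j : Fin n) :
    (attachPath Q u n).Adj (Sum.inr i) (Sum.inr j) ↔ ((i:ℕ)+1 = j ∨ (j:ℕ)+1 = i) := by
  simp only [attachPath, SimpleGraph.fromRel_adj]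
  constructor
  · rintro ⟨hne, h | h⟩ <;> aesop
  · rintro (h | h)
    · exact ⟨by simp [Fin.ext_iff]; omega, Or.inl (Or.inr (Or.inl ⟨i, j, rfl, rfl, h⟩))⟩
    · exact ⟨by simp [Fin.ext_iff]; omega, Or.inr (Or.inr (Or.inl ⟨j, i, rfl, rfl, h⟩))⟩

lemma adj_rl (i : Fin n) (v : V) :
    (attachPath Q u n).Adj (Sum.inr i) (Sum.inl v) ↔ v = u ∧ (i : ℕ) = 0 := by
  rw [SimpleGraph.adj_comm]; exact adj_lr Q u n v i

end
section Deg
attribute [local instance] Classical.propDecidable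
open Finset
variable {V : Type*} [Fintype V] (Q : SimpleGraph V) (u : V) (n : ℕ)

lemma degree_eq_sum (G : SimpleGraph V) (v : V) [Fintype (G.neighborSet v)] :
    G.degree v = ∑ w : V, if G.Adj v w then 1 else 0 := by
  classical
  rw [show G.degree v = (G.neighborFinset v).card from rfl]
  rw [show G.neighborFinset v = Finset.univ.filter (G.Adj v) by
    ext w; simp [SimpleGraph.mem_neighborFinset]]
  rw [Finset.card_filter]

lemma sum_fin_ite {M : Type*} [AddCommMonoid M] (m : ℕ) (c : ℕ → M) :
    ∑ j : Fin n, (if (j : ℕ) = m then c j else 0) = if m < n then c m else 0 := by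
  rw [Fin.sum_univ_eq_sum_range (fun k => if k = m then c k else 0)]
  rw [Finset.sum_ite_eq' (Finset.range n) m c]
  simp

lemma deg_inl (hn : 1 ≤ n) (v : V) :
    (attachPath Q u n).degree (Sum.inl v) = Q.degree v + (if v = u then 1 else 0) := by
  classical
  rw [degree_eq_sum, degree_eq_sum, Fintype.sum_sum_type]
  congr 1
  · exact Finset.sum_congr rfl fun w _ => by rw [adj_ll]
  · simp only [adj_lr]
    rcases eq_or_ne v u with rfl | hv
    · simp only [true_and]
      rw [sum_fin_ite n 0 (fun _ => 1)]
      simp [Nat.lt_of_lt_of_le Nat.zero_lt_one hn]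
    · simp [hv]

lemma deg_inr (i : Fin n) :
    (attachPath Q u n).degree (Sum.inr i) = 1 + (if (i:ℕ)+1 < n then 1 else 0) := by
  classical
  rw [degree_eq_sum, Fintype.sum_sum_type]
  have h1 : ∑ v : V, (if (attachPath Q u n).Adj (Sum.inr i) (Sum.inl v) then 1 else 0)
      = (if (i:ℕ) = 0 then 1 else 0) := by
    simp only [adj_rl]
    rcases eq_or_ne (i:ℕ) 0 with h | h
    · simp only [h, and_true]
      rw [Finset.sum_ite_eq' Finset.univ u (fun _ => 1)]
      simp
    · simp [h]
  have h2 : ∑ j : Fin n, (if (attachPath Q u n).Adj (Sum.inr i) (Sum.inr j) then (1:ℕ) else 0)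
      = (if (i:ℕ)+1 < n then 1 else 0) + (if (i:ℕ) ≠ 0 then 1 else 0) := by
    simp only [adj_rr]
    have : ∀ j : Fin n, (if ((i:ℕ)+1 = j ∨ (j:ℕ)+1 = i) then (1:ℕ) else 0)
        = (if (j:ℕ) = (i:ℕ)+1 then 1 else 0) + (if (i:ℕ) ≠ 0 ∧ (j:ℕ) = (i:ℕ)-1 then 1 else 0) := by
      intro j; split_ifs <;> omega
    rw [Finset.sum_congr rfl fun j _ => this j, Finset.sum_add_distrib]
    congr 1
    · rw [sum_fin_ite n ((i:ℕ)+1) (fun _ => 1)]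
    · rcases eq_or_ne (i:ℕ) 0 with h | h
      · simp [h]
      · simp only [h, ne_eq, not_false_iff, true_and, if_true]
        rw [sum_fin_ite n ((i:ℕ)-1) (fun _ => 1)]
        have : (i:ℕ) - 1 < n := lt_of_le_of_lt (Nat.sub_le _ _) i.isLt
        simp [this]
  rw [h1, h2]
  have := i.isLt
  split_ifs <;> omega

end Deg
section Aux
attribute [local instance] Classical.propDecidable
open Finset
variable {V : Type*} [Fintype V] (Q : SimpleGraph V) (u : V) (n : ℕ)

noncomputable def bdeg (c : ℕ) (v : V) : ℝ :=
  (Q.degree v : ℝ) + if v = u then (c : ℝ) else 0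

noncomputable def Aux (c : ℕ) : ℝ :=
  (1/2) * ∑ v : V, ∑ w : V,
    if Q.Adj v w then (Real.sqrt (bdeg Q u c v + bdeg Q u c w))⁻¹ else 0

noncomputable def pdegR (n : ℕ) : ℝ := if 2 ≤ n then 2 else 1
noncomputable def pathP (n : ℕ) : ℝ := if 2 ≤ n then ((n:ℝ)-2)/2 + (Real.sqrt 3)⁻¹ else 0

lemma sumConn_eq_aux (G : SimpleGraph V) (x : V) : sumConn G = Aux G x 0 := by
  rw [sumConn, Aux]
  congr 1
  apply Finset.sum_congr rfl; intro v _
  apply Finset.sum_congr rfl; intro w _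
  have hb : ∀ y : V, bdeg G x 0 y = (G.degree y : ℝ) := by
    intro y; rw [bdeg]; simp
  split_ifs with h
  · rw [hb, hb]
  · rfl

lemma bdeg_attach_inl (hn : 1 ≤ n) (c : ℕ) (v : V) :
    bdeg (attachPath Q u n) (Sum.inl u) c (Sum.inl v) = bdeg Q u (c+1) v := by
  rw [bdeg, bdeg, deg_inl Q u n hn v]
  rcases eq_or_ne v u with rfl | hv
  · simp; push_cast; ring
  · simp [hv]

lemma bdeg_attach_inr (c : ℕ) (i : Fin n) :
    bdeg (attachPath Q u n) (Sum.inl u) c (Sum.inr i)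
      = 1 + (if (i:ℕ)+1 < n then (1:ℝ) else 0) := by
  rw [bdeg, deg_inr Q u n i]
  simp only [Sum.inr.injEq, reduceCtorEq, if_false]
  push_cast
  split_ifs <;> simp

noncomputable def Fdeg (n : ℕ) (k : ℕ) : ℝ := 1 + (if k+1 < n then (1:ℝ) else 0)

lemma bdeg_attach_inr' (c : ℕ) (i : Fin n) :
    bdeg (attachPath Q u n) (Sum.inl u) c (Sum.inr i) = Fdeg n (i:ℕ) := by
  rw [bdeg_attach_inr, Fdeg]

end Aux
section Main
attribute [local instance] Classical.propDecidable
open Finset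
variable {V : Type*} [Fintype V] (Q : SimpleGraph V) (u : V) (n : ℕ)

lemma path_sum (n : ℕ) :
    ∑ k ∈ Finset.range n, (if k+1 < n then (Real.sqrt (Fdeg n k + Fdeg n (k+1)))⁻¹ else 0)
      = pathP n := by
  rcases lt_or_ge n 2 with hn | hn
  · rw [pathP, if_neg (by omega)]
    apply Finset.sum_eq_zero
    intro k hk
    rw [if_neg (by simp at hk; omega)]
  · rw [pathP, if_pos hn]
    have h1 : ∑ k ∈ Finset.range n, (if k+1 < n then (Real.sqrt (Fdeg n k + Fdeg n (k+1)))⁻¹ else 0)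
        = ∑ k ∈ Finset.range (n-1), (Real.sqrt (Fdeg n k + Fdeg n (k+1)))⁻¹ := by
      rw [Finset.sum_ite, Finset.sum_const_zero, add_zero]
      apply Finset.sum_congr _ (fun _ _ => rfl)
      ext k
      simp only [Finset.mem_filter, Finset.mem_range]
      omega
    rw [h1]
    have h2 : n - 1 = (n-2) + 1 := by omega
    rw [h2, Finset.sum_range_succ]
    have h3 : ∀ k ∈ Finset.range (n-2), (Real.sqrt (Fdeg n k + Fdeg n (k+1)))⁻¹ = 1/2 := by
      intro k hk
      simp only [Finset.mem_range] at hk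
      rw [Fdeg, Fdeg, if_pos (by omega), if_pos (by omega)]
      rw [show (1:ℝ)+1+(1+(1:ℝ)) = 2^2 by norm_num, Real.sqrt_sq (by norm_num)]
      norm_num
    rw [Finset.sum_congr rfl h3, Finset.sum_const]
    have h4 : Fdeg n (n-2) + Fdeg n (n-2+1) = 3 := by
      rw [Fdeg, Fdeg, if_pos (by omega), if_neg (by omega)]
      ring
    rw [h4]
    have : ((n-2 : ℕ) : ℝ) = (n:ℝ) - 2 := by
      have := Nat.cast_sub (show 2 ≤ n from hn) (R := ℝ); simpa using this
    rw [nsmul_eq_mul, Finset.card_range, this]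
    ring

lemma aux_attach (hn : 1 ≤ n) (c : ℕ) :
    Aux (attachPath Q u n) (Sum.inl u) c
      = Aux Q u (c+1) + (Real.sqrt ((Q.degree u : ℝ) + 1 + c + pdegR n))⁻¹ + pathP n := by
  rw [Aux, Fintype.sum_sum_type]
  have hsplit : ∀ x : V ⊕ Fin n,
      ∑ y : V ⊕ Fin n, (if (attachPath Q u n).Adj x y then
        (Real.sqrt (bdeg (attachPath Q u n) (Sum.inl u) c x
          + bdeg (attachPath Q u n) (Sum.inl u) c y))⁻¹ else 0)
      = (∑ w : V, (if (attachPath Q u n).Adj x (Sum.inl w) then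
        (Real.sqrt (bdeg (attachPath Q u n) (Sum.inl u) c x
          + bdeg (attachPath Q u n) (Sum.inl u) c (Sum.inl w)))⁻¹ else 0))
      + (∑ j : Fin n, (if (attachPath Q u n).Adj x (Sum.inr j) then
        (Real.sqrt (bdeg (attachPath Q u n) (Sum.inl u) c x
          + bdeg (attachPath Q u n) (Sum.inl u) c (Sum.inr j)))⁻¹ else 0)) := by
    intro x; exact Fintype.sum_sum_type _
  simp only [hsplit]
  rw [Finset.sum_add_distrib, Finset.sum_add_distrib]
  -- now four blocks
  set d : ℝ := (Q.degree u : ℝ) with hd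
  have hLL : ∑ v : V, ∑ w : V, (if (attachPath Q u n).Adj (Sum.inl v) (Sum.inl w) then
        (Real.sqrt (bdeg (attachPath Q u n) (Sum.inl u) c (Sum.inl v)
          + bdeg (attachPath Q u n) (Sum.inl u) c (Sum.inl w)))⁻¹ else 0)
      = 2 * Aux Q u (c+1) := by
    rw [Aux]
    rw [show (2:ℝ) * ((1/2) * ∑ v : V, ∑ w : V,
      (if Q.Adj v w then (Real.sqrt (bdeg Q u (c+1) v + bdeg Q u (c+1) w))⁻¹ else 0))
      = ∑ v : V, ∑ w : V,
      (if Q.Adj v w then (Real.sqrt (bdeg Q u (c+1) v + bdeg Q u (c+1) w))⁻¹ else 0) by ring]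
    apply Finset.sum_congr rfl; intro v _
    apply Finset.sum_congr rfl; intro w _
    rw [bdeg_attach_inl Q u n hn, bdeg_attach_inl Q u n hn]
    congr 1
    exact propext (adj_ll Q u n v w)
  have hpd : (1:ℝ) + (if 0+1 < n then (1:ℝ) else 0) = pdegR n := by
    rw [pdegR]; split_ifs <;> first | omega | norm_num
  have hLR : ∑ v : V, ∑ j : Fin n, (if (attachPath Q u n).Adj (Sum.inl v) (Sum.inr j) then
        (Real.sqrt (bdeg (attachPath Q u n) (Sum.inl u) c (Sum.inl v)
          + bdeg (attachPath Q u n) (Sum.inl u) c (Sum.inr j)))⁻¹ else 0)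
      = (Real.sqrt (d + 1 + c + pdegR n))⁻¹ := by
    have key : ∀ v : V, ∑ j : Fin n, (if (attachPath Q u n).Adj (Sum.inl v) (Sum.inr j) then
        (Real.sqrt (bdeg (attachPath Q u n) (Sum.inl u) c (Sum.inl v)
          + bdeg (attachPath Q u n) (Sum.inl u) c (Sum.inr j)))⁻¹ else 0)
        = (if v = u then (Real.sqrt (d + 1 + c + pdegR n))⁻¹ else 0) := by
      intro v
      rcases eq_or_ne v u with hv | hv
      · rw [hv, if_pos rfl]
        simp only [adj_lr, bdeg_attach_inr', eq_self_iff_true, true_and]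
        rw [sum_fin_ite n 0 (fun k => (Real.sqrt (bdeg (attachPath Q u n) (Sum.inl u) c
          (Sum.inl u) + Fdeg n k))⁻¹)]
        rw [if_pos (by omega)]
        rw [bdeg_attach_inl Q u n hn, bdeg]
        rw [if_pos rfl, Fdeg]
        rw [hpd]
        congr 1
        push_cast
        rw [hd]; ring
      · simp [adj_lr, hv]
    rw [Finset.sum_congr rfl (fun v _ => key v)]
    rw [Finset.sum_ite_eq' Finset.univ u (fun _ => (Real.sqrt (d + 1 + c + pdegR n))⁻¹)]
    simp
  have hRL : ∑ i : Fin n, ∑ w : V, (if (attachPath Q u n).Adj (Sum.inr i) (Sum.inl w) then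
        (Real.sqrt (bdeg (attachPath Q u n) (Sum.inl u) c (Sum.inr i)
          + bdeg (attachPath Q u n) (Sum.inl u) c (Sum.inl w)))⁻¹ else 0)
      = (Real.sqrt (d + 1 + c + pdegR n))⁻¹ := by
    have key : ∀ i : Fin n, ∑ w : V, (if (attachPath Q u n).Adj (Sum.inr i) (Sum.inl w) then
        (Real.sqrt (bdeg (attachPath Q u n) (Sum.inl u) c (Sum.inr i)
          + bdeg (attachPath Q u n) (Sum.inl u) c (Sum.inl w)))⁻¹ else 0)
        = (if (i:ℕ) = 0 then (Real.sqrt (d + 1 + c + pdegR n))⁻¹ else 0) := by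
      intro i
      rcases eq_or_ne (i:ℕ) 0 with h0 | h0
      · simp only [adj_rl, h0, eq_self_iff_true, and_true, if_true]
        rw [Finset.sum_ite_eq' Finset.univ u (fun w => (Real.sqrt (bdeg (attachPath Q u n)
          (Sum.inl u) c (Sum.inr i) + bdeg (attachPath Q u n) (Sum.inl u) c (Sum.inl w)))⁻¹)]
        rw [if_pos (Finset.mem_univ u)]
        rw [bdeg_attach_inr', h0, Fdeg, hpd, bdeg_attach_inl Q u n hn, bdeg, if_pos rfl]
        congr 1
        push_cast
        rw [hd]; ring
      · simp [adj_rl, h0]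
    rw [Finset.sum_congr rfl (fun i _ => key i)]
    rw [Fin.sum_univ_eq_sum_range (fun k => if k = 0 then (Real.sqrt (d + 1 + c + pdegR n))⁻¹ else 0)]
    rw [Finset.sum_ite_eq' (Finset.range n) 0 (fun _ => (Real.sqrt (d + 1 + c + pdegR n))⁻¹)]
    rw [if_pos (Finset.mem_range.2 (by omega))]
  have hRR : ∑ i : Fin n, ∑ j : Fin n, (if (attachPath Q u n).Adj (Sum.inr i) (Sum.inr j) then
        (Real.sqrt (bdeg (attachPath Q u n) (Sum.inl u) c (Sum.inr i)
          + bdeg (attachPath Q u n) (Sum.inl u) c (Sum.inr j)))⁻¹ else 0)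
      = 2 * pathP n := by
    simp only [adj_rr, bdeg_attach_inr']
    have hpt : ∀ i j : Fin n, (if ((i:ℕ)+1 = (j:ℕ) ∨ (j:ℕ)+1 = (i:ℕ)) then
          (Real.sqrt (Fdeg n i + Fdeg n j))⁻¹ else 0)
        = (if (j:ℕ) = (i:ℕ)+1 then (Real.sqrt (Fdeg n i + Fdeg n j))⁻¹ else 0)
          + (if (i:ℕ) = (j:ℕ)+1 then (Real.sqrt (Fdeg n i + Fdeg n j))⁻¹ else 0) := by
      intro i j
      split_ifs <;> first | omega | ring
    simp only [hpt, Finset.sum_add_distrib]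
    have hS1 : ∑ i : Fin n, ∑ j : Fin n, (if (j:ℕ) = (i:ℕ)+1 then
        (Real.sqrt (Fdeg n (i:ℕ) + Fdeg n (j:ℕ)))⁻¹ else 0) = pathP n := by
      have h5 : ∀ i : Fin n, ∑ j : Fin n, (if (j:ℕ) = (i:ℕ)+1 then
          (Real.sqrt (Fdeg n (i:ℕ) + Fdeg n (j:ℕ)))⁻¹ else 0)
          = if (i:ℕ)+1 < n then (Real.sqrt (Fdeg n (i:ℕ) + Fdeg n ((i:ℕ)+1)))⁻¹ else 0 := fun i =>
        sum_fin_ite n ((i:ℕ)+1) (fun k => (Real.sqrt (Fdeg n (i:ℕ) + Fdeg n k))⁻¹)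
      rw [Finset.sum_congr rfl (fun i _ => h5 i)]
      rw [Fin.sum_univ_eq_sum_range
        (fun k => if k+1 < n then (Real.sqrt (Fdeg n k + Fdeg n (k+1)))⁻¹ else 0)]
      exact path_sum n
    have hS2 : ∑ i : Fin n, ∑ j : Fin n, (if (i:ℕ) = (j:ℕ)+1 then
        (Real.sqrt (Fdeg n (i:ℕ) + Fdeg n (j:ℕ)))⁻¹ else 0) = pathP n := by
      rw [Finset.sum_comm]
      have h5 : ∀ j : Fin n, ∑ i : Fin n, (if (i:ℕ) = (j:ℕ)+1 then
          (Real.sqrt (Fdeg n (i:ℕ) + Fdeg n (j:ℕ)))⁻¹ else 0)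
          = if (j:ℕ)+1 < n then (Real.sqrt (Fdeg n ((j:ℕ)+1) + Fdeg n (j:ℕ)))⁻¹ else 0 := fun j =>
        sum_fin_ite n ((j:ℕ)+1) (fun k => (Real.sqrt (Fdeg n k + Fdeg n (j:ℕ)))⁻¹)
      rw [Finset.sum_congr rfl (fun j _ => h5 j)]
      have hcomm : ∀ k : ℕ, (if k+1 < n then (Real.sqrt (Fdeg n (k+1) + Fdeg n k))⁻¹ else 0)
          = (if k+1 < n then (Real.sqrt (Fdeg n k + Fdeg n (k+1)))⁻¹ else 0) := by
        intro k; rw [add_comm (Fdeg n (k+1))]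
      simp only [hcomm]
      rw [Fin.sum_univ_eq_sum_range
        (fun k => if k+1 < n then (Real.sqrt (Fdeg n k + Fdeg n (k+1)))⁻¹ else 0)]
      exact path_sum n
    rw [hS1, hS2]
    ring
  rw [hLL, hLR, hRL, hRR]
  ring

end Main

lemma key_poly (x y z : ℝ) (hx : 2 ≤ x) (hy : y^2 = x^2 + 1) (hz : z^2 = 3)
    (hy0 : 0 < y) (hz0 : 0 < z) :
    2*x*z + x*y < x*y*z + y*z := by
  have hx0 : (0:ℝ) < x := by linarith
  set w := y*z with hwdef
  have hw0 : 0 < w := mul_pos hy0 hz0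
  have hw2 : w^2 = 3*(x^2+1) := by
    have : w^2 = y^2 * z^2 := by rw [hwdef]; ring
    rw [this, hy, hz]; ring
  have hA : 4*x^2*w < 2*x^4+6*x^3-7*x^2+6*x+3 := by
    have hR : (0:ℝ) < 2*x^4+6*x^3-7*x^2+6*x+3 := by nlinarith [sq_nonneg (x-2), sq_nonneg x]
    have hsq : (4*x^2*w)^2 < (2*x^4+6*x^3-7*x^2+6*x+3)^2 := by
      have hL : (4*x^2*w)^2 = 48*x^6+48*x^4 := by
        have : (4*x^2*w)^2 = 16*x^4*w^2 := by ring
        rw [this, hw2]; ring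
      rw [hL]
      have ht : (0:ℝ) ≤ x - 2 := by linarith
      nlinarith [pow_nonneg ht 8, pow_nonneg ht 7, pow_nonneg ht 6, pow_nonneg ht 5,
        pow_nonneg ht 4, pow_nonneg ht 3, pow_nonneg ht 2, ht]
    exact lt_of_pow_lt_pow_left₀ 2 hR.le hsq
  have hB : (x*(2*z+y))^2 < (w*(x+1))^2 := by
    have hL : (x*(2*z+y))^2 = x^2*(4*z^2 + 4*w + y^2) := by rw [hwdef]; ring
    have hR : (w*(x+1))^2 = w^2*(x+1)^2 := by ring
    rw [hL, hR, hz, hy, hw2]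
    nlinarith [hA, sq_nonneg x]
  have hfin : x*(2*z+y) < w*(x+1) :=
    lt_of_pow_lt_pow_left₀ 2 (by positivity) hB
  nlinarith [hfin]

lemma case1 (d : ℝ) (hd : 1 ≤ d) :
    2*(Real.sqrt (d+4))⁻¹ < (Real.sqrt (d+3))⁻¹ + 1 - (Real.sqrt 3)⁻¹ := by
  set x := Real.sqrt (d+3)
  set y := Real.sqrt (d+4)
  set z := Real.sqrt 3
  have hx2 : x^2 = d + 3 := Real.sq_sqrt (by linarith)
  have hy2 : y^2 = d + 4 := Real.sq_sqrt (by linarith)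
  have hz2 : z^2 = 3 := Real.sq_sqrt (by norm_num)
  have hx : 2 ≤ x := by
    rw [show (2:ℝ) = Real.sqrt 4 by rw [show (4:ℝ) = 2^2 by norm_num, Real.sqrt_sq]; norm_num]
    exact Real.sqrt_le_sqrt (by linarith)
  have hx0 : 0 < x := by linarith
  have hy0 : 0 < y := Real.sqrt_pos.2 (by linarith)
  have hz0 : 0 < z := Real.sqrt_pos.2 (by norm_num)
  have key := key_poly x y z hx (by rw [hy2, hx2]; ring) hz2 hy0 hz0
  have hdiff : (x⁻¹ + 1 - z⁻¹) - 2*y⁻¹ = (x*y*z + y*z - (2*x*z + x*y))/(x*y*z) := by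
    field_simp
    ring
  have : 0 < (x⁻¹ + 1 - z⁻¹) - 2*y⁻¹ := by
    rw [hdiff]
    apply div_pos (by linarith) (by positivity)
  linarith

lemma case2 (d : ℝ) (hd : 1 ≤ d) : (Real.sqrt (d+4))⁻¹ < 1/2 := by
  rw [show (1:ℝ)/2 = (Real.sqrt 4)⁻¹ by
    rw [show (4:ℝ) = 2^2 by norm_num, Real.sqrt_sq] <;> norm_num]
  apply inv_strictAnti₀ (Real.sqrt_pos.2 (by norm_num))
  exact Real.sqrt_lt_sqrt (by norm_num) (by linarith)

lemma case3 (d : ℝ) (hd : 1 ≤ d) : (Real.sqrt (d+3))⁻¹ < (Real.sqrt 3)⁻¹ := by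
  apply inv_strictAnti₀ (Real.sqrt_pos.2 (by norm_num))
  exact Real.sqrt_lt_sqrt (by norm_num) (by linarith)
section Final
attribute [local instance] Classical.propDecidable
open Finset
variable {V : Type*} [Fintype V]

lemma bdeg_le (Q : SimpleGraph V) (u v : V) : bdeg Q u 1 v ≤ bdeg Q u 2 v := by
  rw [bdeg, bdeg]; split_ifs <;> norm_num

lemma bdeg_ge (Q : SimpleGraph V) (u v : V) (c : ℕ) : (Q.degree v : ℝ) ≤ bdeg Q u c v := by
  rw [bdeg]; split_ifs <;> simp

lemma aux_mono (Q : SimpleGraph V) (u : V) : Aux Q u 2 ≤ Aux Q u 1 := by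
  rw [Aux, Aux]
  apply mul_le_mul_of_nonneg_left _ (by norm_num)
  apply Finset.sum_le_sum; intro v _
  apply Finset.sum_le_sum; intro w _
  split_ifs with h
  · have hdv : (1:ℝ) ≤ (Q.degree v : ℝ) := by
      exact_mod_cast (SimpleGraph.degree_pos_iff_exists_adj Q v).2 ⟨w, h⟩
    have h1 : (1:ℝ) ≤ bdeg Q u 1 v := le_trans hdv (bdeg_ge Q u v 1)
    have h2 : (0:ℝ) ≤ bdeg Q u 1 w := le_trans (by positivity) (bdeg_ge Q u w 1)
    apply inv_anti₀ (Real.sqrt_pos.2 (by linarith))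
    exact Real.sqrt_le_sqrt (by linarith [bdeg_le Q u v, bdeg_le Q u w])
  · exact le_refl _

lemma pdegR_two {n : ℕ} (hn : 2 ≤ n) : pdegR n = 2 := if_pos hn
lemma pdegR_one : pdegR 1 = 1 := if_neg (by omega)
lemma pathP_two {n : ℕ} (hn : 2 ≤ n) : pathP n = ((n:ℝ)-2)/2 + (Real.sqrt 3)⁻¹ := if_pos hn
lemma pathP_one : pathP 1 = 0 := if_neg (by omega)

end Final
theorem stmt_18 {V : Type*} [Fintype V] (Q : SimpleGraph V) (hQ : Q.Connected)
    (hV : 2 ≤ Fintype.card V) (u : V) (a b : ℕ) (hb : 1 ≤ b) (hab : b ≤ a) :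
    sumConn (attachPath (attachPath Q u a) (Sum.inl u) b) < sumConn (attachPath Q u (a + b)) := by
  classical
  have ha : 1 ≤ a := le_trans hb hab
  have hab2 : 2 ≤ a + b := by omega
  obtain ⟨v, hvne⟩ := Fintype.exists_ne_of_one_lt_card (by omega) u
  obtain ⟨p⟩ := hQ.preconnected u v
  have hadj : ∃ w, Q.Adj u w := by
    cases p with
    | nil => exact absurd rfl hvne
    | cons h _ => exact ⟨_, h⟩
  have hd1 : 1 ≤ Q.degree u := (SimpleGraph.degree_pos_iff_exists_adj Q u).2 hadj
  have hd : (1:ℝ) ≤ (Q.degree u : ℝ) := by exact_mod_cast hd1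
  set d : ℝ := (Q.degree u : ℝ) with hddef
  rw [sumConn_eq_aux _ (Sum.inl (Sum.inl u)), sumConn_eq_aux _ (Sum.inl u)]
  rw [aux_attach (attachPath Q u a) (Sum.inl u) b hb 0]
  rw [aux_attach Q u (a+b) (by omega) 0]
  rw [aux_attach Q u a ha 1]
  have hdeg : (((attachPath Q u a).degree (Sum.inl u) : ℝ)) = d + 1 := by
    rw [deg_inl Q u a ha u, if_pos rfl]; push_cast; ring
  rw [hdeg]
  have hmono := aux_mono Q u
  have hsq1 : Real.sqrt (d + 1 + ((1:ℕ):ℝ) + pdegR a) = Real.sqrt (d + 2 + pdegR a) := by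
    congr 1; push_cast; ring
  have hsq2 : Real.sqrt (d + 1 + 1 + ((0:ℕ):ℝ) + pdegR b) = Real.sqrt (d + 2 + pdegR b) := by
    congr 1; push_cast; ring
  have hsq3 : Real.sqrt (d + 1 + ((0:ℕ):ℝ) + pdegR (a+b)) = Real.sqrt (d + 3) := by
    rw [pdegR_two hab2]; congr 1; push_cast; ring
  have he : Real.sqrt (d + 2 + 2) = Real.sqrt (d + 4) := by congr 1; ring
  have he2 : Real.sqrt (d + 2 + 1) = Real.sqrt (d + 3) := by congr 1; ring
  rw [hsq1, hsq2, hsq3, pathP_two hab2]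
  rcases eq_or_lt_of_le hb with hb1 | hb2
  · -- b = 1
    rw [← hb1, pdegR_one, pathP_one, he2]
    rcases eq_or_lt_of_le hab with ha1 | ha2
    · -- a = b = 1
      rw [← hb1] at ha1
      rw [← ha1, pdegR_one, pathP_one, he2]
      have h3 := case3 d hd
      push_cast
      norm_num
      linarith [h3]
    · -- a ≥ 2
      have h2a : 2 ≤ a := by omega
      rw [pdegR_two h2a, pathP_two h2a, he]
      have h2 := case2 d hd
      push_cast [← hb1]
      linarith [h2]
  · -- b ≥ 2
    have h2b : 2 ≤ b := hb2
    rw [pathP_two h2b, pdegR_two h2b, pathP_two (show 2 ≤ a by omega),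
      pdegR_two (show 2 ≤ a by omega), he]
    have h1 := case1 d hd
    push_cast
    linarith [h1]
end
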